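/- Let B, B' ∈ ℂ^{m×m}, y ∈ ℂ^m a unit vector with B y = 0, Y_⊥ an orthonormal basis of span{y}^⊥, and Z_⊥ an orthonormal basis of span{B' y}^⊥, with Z_⊥ᴴ B Y_⊥ invertible. Suppose Δλ ∈ ℂ, E ∈ ℂ^{m×m}, r ∈ ℂ^m and Δy ∈ ℂ^m with yᴴ Δy = 0 satisfy Δλ·B' y + B Δy + E y = r. Then ‖Δy‖ ≤ ‖(Z_⊥ᴴ B Y_⊥)⁻¹‖ · (‖E‖ + ‖r‖). -/

import Mathlib

open Matrix

/-- Euclidean norm of a complex vector. -/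
noncomputable def enorm' {n : ℕ} (x : Fin n → ℂ) : ℝ :=
  ‖(WithLp.equiv 2 (Fin n → ℂ)).symm x‖

/-- Spectral (ℓ²-operator) norm of a complex matrix. -/
noncomputable def spec {a b : ℕ} (M : Matrix (Fin a) (Fin b) ℂ) : ℝ :=
  ‖LinearMap.toContinuousLinearMap (Matrix.toEuclideanLin M)‖

open scoped Matrix.Norms.L2Operator

private lemma spec_eq {a b : ℕ} (M : Matrix (Fin a) (Fin b) ℂ) : spec M = ‖M‖ := rfl

private lemma spec_nonneg {a b : ℕ} (M : Matrix (Fin a) (Fin b) ℂ) : 0 ≤ spec M :=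
  norm_nonneg _

private lemma enorm_nonneg' {n : ℕ} (x : Fin n → ℂ) : 0 ≤ enorm' x := norm_nonneg _

private lemma enorm_mulVec_le {a b : ℕ} (A : Matrix (Fin a) (Fin b) ℂ) (x : Fin b → ℂ) :
    enorm' (A.mulVec x) ≤ spec A * enorm' x :=
  Matrix.l2_opNorm_mulVec A ((WithLp.equiv 2 (Fin b → ℂ)).symm x)

private lemma enorm'_sub_le {n : ℕ} (x z : Fin n → ℂ) : enorm' (x - z) ≤ enorm' x + enorm' z := by
  simpa [enorm'] using norm_sub_le ((WithLp.equiv 2 (Fin n → ℂ)).symm x)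
    ((WithLp.equiv 2 (Fin n → ℂ)).symm z)

private lemma spec_one_le {a : ℕ} : spec (1 : Matrix (Fin a) (Fin a) ℂ) ≤ 1 := by
  rw [spec]
  refine ContinuousLinearMap.opNorm_le_bound _ zero_le_one (fun x => ?_)
  rw [one_mul]
  have h : LinearMap.toContinuousLinearMap (toEuclideanLin
      (1 : Matrix (Fin a) (Fin a) ℂ)) x = x := by
    simp [toEuclideanLin_apply]
  rw [h]

private lemma spec_le_one_of_gram {a b : ℕ} (Y : Matrix (Fin a) (Fin b) ℂ)
    (h : Yᴴ * Y = 1) : spec Y ≤ 1 := by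
  have h1 : spec Y * spec Y ≤ 1 := by
    rw [spec_eq, ← Matrix.l2_opNorm_conjTranspose_mul_self, h, ← spec_eq]
    exact spec_one_le
  nlinarith [spec_nonneg Y]

private lemma spec_conjTranspose {a b : ℕ} (M : Matrix (Fin a) (Fin b) ℂ) :
    spec Mᴴ = spec M := by
  rw [spec_eq, spec_eq, Matrix.l2_opNorm_conjTranspose]

theorem stmt_14 (k : ℕ) (B B' E : Matrix (Fin (k + 1)) (Fin (k + 1)) ℂ)
    (y Δy r : Fin (k + 1) → ℂ) (Δμ : ℂ)
    (hyunit : enorm' y = 1) (hy : B.mulVec y = 0)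
    (Y Z : Matrix (Fin (k + 1)) (Fin k) ℂ)
    (hY : Yᴴ * Y = 1) (hYy : Yᴴ.mulVec y = 0)
    (hZ : Zᴴ * Z = 1) (hZB'y : Zᴴ.mulVec (B'.mulVec y) = 0)
    (hinv : IsUnit (Zᴴ * B * Y))
    (hΔy : star y ⬝ᵥ Δy = 0)
    (heq : Δμ • B'.mulVec y + B.mulVec Δy + E.mulVec y = r) :
    enorm' Δy ≤ spec (Zᴴ * B * Y)⁻¹ * (spec E + enorm' r) := by
  classical
  set C : Matrix (Fin (k + 1)) (Fin 1) ℂ := Matrix.of (fun i _ => y i) with hC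
  -- C has unit column
  have hysum : (∑ i, (starRingEnd ℂ) (y i) * y i) = 1 := by
    have hv : inner ℂ ((WithLp.equiv 2 (Fin (k + 1) → ℂ)).symm y)
        ((WithLp.equiv 2 (Fin (k + 1) → ℂ)).symm y) = (1 : ℂ) := by
      rw [inner_self_eq_norm_sq_to_K]
      rw [show ‖(WithLp.equiv 2 (Fin (k + 1) → ℂ)).symm y‖ = enorm' y from rfl, hyunit]
      norm_num
    simp only [PiLp.inner_apply, RCLike.inner_apply] at hv
    convert hv using 2 with i
    simp [mul_comm]
  have hCy : Cᴴ * C = 1 := by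
    ext i j
    fin_cases i; fin_cases j
    simpa [Matrix.mul_apply, hC, Matrix.conjTranspose_apply, Matrix.one_apply] using hysum
  have hYC : Yᴴ * C = 0 := by
    ext i j
    have := congrFun hYy i
    simpa [Matrix.mul_apply, hC, Matrix.mulVec, dotProduct] using this
  have hCY : Cᴴ * Y = 0 := by
    have h := congrArg Matrix.conjTranspose hYC
    simpa [Matrix.conjTranspose_mul] using h
  have hGram : fromRows Cᴴ Yᴴ * fromCols C Y = 1 := by
    rw [fromRows_mul, mul_fromCols, mul_fromCols, fromRows_fromCols_eq_fromBlocks,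
      hCy, hCY, hYC, hY, fromBlocks_one]
  have e : Fin (k + 1) ≃ Fin 1 ⊕ Fin k :=
    (finCongr (by omega)).trans finSumFinEquiv.symm
  have hcomp : fromCols C Y * fromRows Cᴴ Yᴴ = 1 :=
    (fromCols_mul_fromRows_eq_one_comm e C Y Cᴴ Yᴴ).mpr hGram
  have hproj : C * Cᴴ + Y * Yᴴ = 1 := by
    rwa [fromCols_mul_fromRows] at hcomp
  set w : Fin k → ℂ := Yᴴ.mulVec Δy with hwdef
  have hΔyw : Δy = Y.mulVec w := by
    have h1 : (C * Cᴴ + Y * Yᴴ).mulVec Δy = Δy := by rw [hproj, Matrix.one_mulVec]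
    have h2 : Cᴴ.mulVec Δy = 0 := by
      ext i
      simpa [Matrix.mulVec, dotProduct, hC, Matrix.conjTranspose_apply] using hΔy
    rw [Matrix.add_mulVec, ← Matrix.mulVec_mulVec, ← Matrix.mulVec_mulVec, h2,
      Matrix.mulVec_zero, zero_add] at h1
    exact h1.symm
  have h3 : Zᴴ *ᵥ (Δμ • B' *ᵥ y + B *ᵥ Δy + E *ᵥ y) = Zᴴ *ᵥ r := congrArg _ heq
  rw [Matrix.mulVec_add, Matrix.mulVec_add, Matrix.mulVec_smul, hZB'y, smul_zero,
    zero_add] at h3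
  have hZeq : (Zᴴ * B * Y) *ᵥ w = Zᴴ *ᵥ (r - E *ᵥ y) := by
    rw [Matrix.mulVec_sub, ← Matrix.mulVec_mulVec, ← Matrix.mulVec_mulVec, ← hΔyw]
    exact eq_sub_of_add_eq h3
  have hdet : IsUnit (Zᴴ * B * Y).det := (Matrix.isUnit_iff_isUnit_det _).mp hinv
  have hw : w = (Zᴴ * B * Y)⁻¹ *ᵥ (Zᴴ *ᵥ (r - E *ᵥ y)) := by
    rw [← hZeq, Matrix.mulVec_mulVec, Matrix.nonsing_inv_mul _ hdet, Matrix.one_mulVec]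
  have hYle : spec Y ≤ 1 := spec_le_one_of_gram Y hY
  have hZle : spec Zᴴ ≤ 1 := by rw [spec_conjTranspose]; exact spec_le_one_of_gram Z hZ
  have hinner : enorm' (Zᴴ *ᵥ (r - E *ᵥ y)) ≤ spec E + enorm' r := by
    calc enorm' (Zᴴ *ᵥ (r - E *ᵥ y)) ≤ spec Zᴴ * enorm' (r - E *ᵥ y) := enorm_mulVec_le _ _
      _ ≤ 1 * enorm' (r - E *ᵥ y) :=
        mul_le_mul_of_nonneg_right hZle (enorm_nonneg' _)
      _ = enorm' (r - E *ᵥ y) := one_mul _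
      _ ≤ enorm' r + enorm' (E *ᵥ y) := enorm'_sub_le _ _
      _ ≤ enorm' r + spec E * enorm' y := by
        exact add_le_add (le_refl _) (enorm_mulVec_le _ _)
      _ = spec E + enorm' r := by rw [hyunit, mul_one, add_comm]
  calc enorm' Δy = enorm' (Y *ᵥ w) := by rw [← hΔyw]
    _ ≤ spec Y * enorm' w := enorm_mulVec_le _ _
    _ ≤ 1 * enorm' w := mul_le_mul_of_nonneg_right hYle (enorm_nonneg' _)
    _ = enorm' w := one_mul _
    _ = enorm' ((Zᴴ * B * Y)⁻¹ *ᵥ (Zᴴ *ᵥ (r - E *ᵥ y))) := by rw [← hw]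
    _ ≤ spec (Zᴴ * B * Y)⁻¹ * enorm' (Zᴴ *ᵥ (r - E *ᵥ y)) := enorm_mulVec_le _ _
    _ ≤ spec (Zᴴ * B * Y)⁻¹ * (spec E + enorm' r) :=
      mul_le_mul_of_nonneg_left hinner (spec_nonneg _)
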